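/- Let U' = {(z₁, z₂) ∈ ℂ² : v − 2z₂z̄₂ > 0, v = z₁ + z̄₁}, let g = (v − 2z₂z̄₂)^{−1/2}(dz₁ − 2z̄₂dz₂)(dz̄₁ − 2z₂dz̄₂) + 4(v − 2z₂z̄₂)^{1/2} dz₂ dz̄₂, and for φ ∈ ℝ let J⁺_{e^{iφ}} = 2Re{ i e^{iφ} [ (2(v − 2z₂z̄₂)^{1/2})^{−1}(dz₁ − 2z̄₂dz₂) ⊗ (∂_{z̄₂} + 2z₂∂_{z̄₁}) − 2(v − 2z₂z̄₂)^{1/2} dz₂ ⊗ ∂_{z̄₁} ] }. Then at every point of U', J⁺_{e^{iφ}} is a real endomorphism of the tangent space with (J⁺_{e^{iφ}})² = −id and g(J⁺_{e^{iφ}}X, J⁺_{e^{iφ}}Y) = g(X,Y) for all tangent vectors X, Y. -/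

import Mathlib

noncomputable section

/-- `w(z₁,z₂) = v − 2z₂z̄₂` where `v = z₁ + z̄₁ = 2 Re z₁`. -/
def wDef (p : ℂ × ℂ) : ℝ := 2 * p.1.re - 2 * Complex.normSq p.2

/-- The region `U' = {(z₁,z₂) ∈ ℂ² : v − 2z₂z̄₂ > 0}`. -/
def Uprime : Set (ℂ × ℂ) := {p | 0 < wDef p}

/-- `K = log(v − 2z₂z̄₂)`. -/
def KDef (p : ℂ × ℂ) : ℝ := Real.log (wDef p)

/-- `K` as a function of `v` at fixed `z₂`. -/
def KofV (z₂ : ℂ) (v : ℝ) : ℝ := Real.log (v - 2 * Complex.normSq z₂)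

/-- `K_v = ∂K/∂v`. -/
def Kv (p : ℂ × ℂ) : ℝ := deriv (KofV p.2) (2 * p.1.re)

/-- `K_vv = ∂²K/∂v²`. -/
def Kvv (p : ℂ × ℂ) : ℝ := deriv (deriv (KofV p.2)) (2 * p.1.re)

/-- The Wirtinger derivative `∂G/∂z = ½(∂_x G − i ∂_y G)` of `G : ℂ → ℂ` at `c`. -/
def wirtD (G : ℂ → ℂ) (c : ℂ) : ℂ :=
  (deriv (fun x : ℝ => G ((x : ℂ) + (c.im : ℂ) * Complex.I)) c.re -
    Complex.I * deriv (fun y : ℝ => G ((c.re : ℂ) + (y : ℂ) * Complex.I)) c.im) / 2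

/-- The Wirtinger derivative `∂G/∂z̄ = ½(∂_x G + i ∂_y G)` of `G : ℂ → ℂ` at `c`. -/
def wirtDbar (G : ℂ → ℂ) (c : ℂ) : ℂ :=
  (deriv (fun x : ℝ => G ((x : ℂ) + (c.im : ℂ) * Complex.I)) c.re +
    Complex.I * deriv (fun y : ℝ => G ((c.re : ℂ) + (y : ℂ) * Complex.I)) c.im) / 2

/-- `K_{v2} = ∂²K/∂v∂z₂` (Wirtinger derivative in `z₂` of `K_v`). -/
def Kv2 (p : ℂ × ℂ) : ℂ :=
  wirtD (fun z₂ => ((deriv (KofV z₂) (2 * p.1.re) : ℝ) : ℂ)) p.2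

/-- `K_{v2̄} = ∂²K/∂v∂z̄₂`. -/
def Kv2bar (p : ℂ × ℂ) : ℂ :=
  wirtDbar (fun z₂ => ((deriv (KofV z₂) (2 * p.1.re) : ℝ) : ℂ)) p.2

/-- `K_{22̄} = ∂²K/∂z₂∂z̄₂` (at fixed `v`). -/
def K22bar (p : ℂ × ℂ) : ℂ :=
  wirtDbar (fun z₂ =>
    wirtD (fun u => ((Real.log (2 * p.1.re - 2 * Complex.normSq u) : ℝ) : ℂ)) z₂) p.2

/-- The 1-form `dz₁ − 2z̄₂dz₂` evaluated on a real tangent vector `X ∈ ℂ² ≅ ℝ⁴`. -/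
def AForm (p : ℂ × ℂ) (X : ℂ × ℂ) : ℂ := X.1 - 2 * starRingEnd ℂ p.2 * X.2

/-- The explicit Ricci-flat metric
`g = (v − 2z₂z̄₂)^{−1/2}(dz₁ − 2z̄₂dz₂)(dz̄₁ − 2z₂dz̄₂) + 4(v − 2z₂z̄₂)^{1/2} dz₂ dz̄₂`
(with `2αβ = α⊗β + β⊗α`) on real tangent vectors. -/
def gExpl (p : ℂ × ℂ) (X Y : ℂ × ℂ) : ℝ :=
  1 / Real.sqrt (wDef p) * (AForm p X * starRingEnd ℂ (AForm p Y)).re +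
    4 * Real.sqrt (wDef p) * (X.2 * starRingEnd ℂ Y.2).re

/-- The almost complex structure
`J⁺_{e^{iφ}} = 2Re{ i e^{iφ} [ (2(v − 2z₂z̄₂)^{1/2})^{−1}(dz₁ − 2z̄₂dz₂) ⊗ (∂_{z̄₂} + 2z₂∂_{z̄₁}) − 2(v − 2z₂z̄₂)^{1/2} dz₂ ⊗ ∂_{z̄₁} ] }`
as a real endomorphism of the tangent space `ℂ² ≅ ℝ⁴`: a real tangent vector `X`
corresponds to `X.1 ∂_{z₁} + conj X.1 ∂_{z̄₁} + X.2 ∂_{z₂} + conj X.2 ∂_{z̄₂}` in the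
complexified tangent space; the components below are the `∂_{z₁}`- and
`∂_{z₂}`-coefficients of `(T + T̄)(X)`. -/
def JExpl (φ : ℝ) (p : ℂ × ℂ) (X : ℂ × ℂ) : ℂ × ℂ :=
  (starRingEnd ℂ (Complex.I * Complex.exp ((φ : ℂ) * Complex.I) *
      (AForm p X / (2 * (Real.sqrt (wDef p) : ℂ)) * (2 * p.2) -
        2 * (Real.sqrt (wDef p) : ℂ) * X.2)),
   starRingEnd ℂ (Complex.I * Complex.exp ((φ : ℂ) * Complex.I) *
      (AForm p X / (2 * (Real.sqrt (wDef p) : ℂ)))))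

set_option maxHeartbeats 2000000 in
/-- At every point of `U'`, `J⁺_{e^{iφ}}` is a real endomorphism of
the tangent space with `(J⁺_{e^{iφ}})² = −id`, compatible with the explicit metric `g`. -/
theorem JExpl_almost_hermitian (φ : ℝ) :
    ∀ p ∈ Uprime,
      (∀ X Y : ℂ × ℂ, JExpl φ p (X + Y) = JExpl φ p X + JExpl φ p Y) ∧
      (∀ (c : ℝ) (X : ℂ × ℂ), JExpl φ p (c • X) = c • JExpl φ p X) ∧
      (∀ X : ℂ × ℂ, JExpl φ p (JExpl φ p X) = -X) ∧
      (∀ X Y : ℂ × ℂ, gExpl p (JExpl φ p X) (JExpl φ p Y) = gExpl p X Y) := by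
  intro p hp
  have hw : 0 < wDef p := hp
  have hs : 0 < Real.sqrt (wDef p) := Real.sqrt_pos.mpr hw
  set s : ℝ := Real.sqrt (wDef p) with hsdef
  clear_value s
  have hsne : (s : ℂ) ≠ 0 := by
    exact_mod_cast (Complex.ofReal_ne_zero).mpr hs.ne'
  set e : ℂ := Complex.I * Complex.exp ((φ : ℂ) * Complex.I) with hedef
  clear_value e
  have hee : e * starRingEnd ℂ e = 1 := by
    rw [hedef]
    rw [map_mul, ← Complex.exp_conj, map_mul, Complex.conj_ofReal, Complex.conj_I]
    have hexp : Complex.exp ((φ:ℂ) * Complex.I) * Complex.exp ((φ:ℂ) * -Complex.I) = 1 := by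
      rw [← Complex.exp_add, show (φ:ℂ) * Complex.I + (φ:ℂ) * -Complex.I = 0 by ring,
        Complex.exp_zero]
    have h2 := Complex.I_mul_I
    linear_combination (-(Complex.exp ((φ:ℂ) * Complex.I) *
      Complex.exp ((φ:ℂ) * -Complex.I))) * h2 + hexp
  -- key component identities
  have hA : ∀ X : ℂ × ℂ, AForm p (JExpl φ p X) =
      -2 * (s : ℂ) * starRingEnd ℂ e * starRingEnd ℂ X.2 := by
    intro X
    simp only [AForm, JExpl, ← hsdef, ← hedef, map_mul, map_sub, map_div₀, map_ofNat,
      Complex.conj_ofReal]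
    field_simp
    ring
  have hJ2 : ∀ X : ℂ × ℂ, (JExpl φ p X).2 =
      starRingEnd ℂ e * starRingEnd ℂ (AForm p X) / (2 * (s : ℂ)) := by
    intro X
    simp only [JExpl, ← hsdef, ← hedef, map_mul, map_div₀, map_ofNat, Complex.conj_ofReal]
    ring
  have hJ1 : ∀ X : ℂ × ℂ, (JExpl φ p X).1 =
      starRingEnd ℂ (e * (AForm p X / (2 * (s : ℂ)) * (2 * p.2) - 2 * (s : ℂ) * X.2)) := by
    intro X
    simp only [JExpl, ← hsdef, ← hedef]
  refine ⟨?_, ?_, ?_, ?_⟩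
  · intro X Y
    have h1 : AForm p (X + Y) = AForm p X + AForm p Y := by
      simp [AForm]; ring
    refine Prod.ext ?_ ?_ <;>
      simp only [JExpl, ← hsdef, ← hedef, h1, Prod.fst_add, Prod.snd_add, map_mul,
        map_sub, map_add, map_div₀, map_ofNat, Complex.conj_ofReal] <;>
      field_simp <;> ring
  · intro c X
    have h1 : AForm p (c • X) = (c : ℂ) * AForm p X := by
      simp [AForm, Prod.smul_fst, Prod.smul_snd, Complex.real_smul]; ring
    refine Prod.ext ?_ ?_ <;>
      simp only [JExpl, ← hsdef, ← hedef, h1, Prod.smul_fst, Prod.smul_snd,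
        Complex.real_smul, map_mul, map_sub, map_div₀, map_ofNat, Complex.conj_ofReal] <;>
      field_simp <;> ring
  · intro X
    have h2 : (JExpl φ p (JExpl φ p X)).2 = -X.2 := by
      rw [hJ2, hA]
      simp only [map_mul, map_neg, map_ofNat, Complex.conj_ofReal, Complex.conj_conj]
      field_simp
      linear_combination (-X.2) * hee
    have h1 : (JExpl φ p (JExpl φ p X)).1 = -X.1 := by
      have hAX : AForm p X = X.1 - 2 * starRingEnd ℂ p.2 * X.2 := rfl
      rw [hJ1, hA, hJ2]
      simp only [map_mul, map_sub, map_div₀, map_neg, map_ofNat, Complex.conj_ofReal,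
        Complex.conj_conj, hAX, map_sub, map_mul, map_ofNat]
      field_simp
      linear_combination (-X.1) * hee
    exact Prod.ext h1 h2
  · intro X Y
    have key1 : AForm p (JExpl φ p X) * starRingEnd ℂ (AForm p (JExpl φ p Y)) =
        4 * (s:ℂ)^2 * (starRingEnd ℂ X.2 * Y.2) := by
      rw [hA, hA]
      simp only [map_mul, map_neg, map_ofNat, Complex.conj_ofReal, Complex.conj_conj]
      linear_combination (4 * (s:ℂ)^2 * starRingEnd ℂ X.2 * Y.2) * hee
    have key2 : (JExpl φ p X).2 * starRingEnd ℂ ((JExpl φ p Y).2) =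
        starRingEnd ℂ (AForm p X) * AForm p Y / (4 * (s:ℂ)^2) := by
      rw [hJ2, hJ2]
      simp only [map_mul, map_div₀, map_ofNat, Complex.conj_ofReal, Complex.conj_conj]
      field_simp
      linear_combination (4 * starRingEnd ℂ (AForm p X) * AForm p Y) * hee
    have hre1 : (starRingEnd ℂ X.2 * Y.2).re = (X.2 * starRingEnd ℂ Y.2).re := by
      rw [← Complex.conj_re (X.2 * starRingEnd ℂ Y.2), map_mul, Complex.conj_conj]
    have hre2 : (starRingEnd ℂ (AForm p X) * AForm p Y).re =
        (AForm p X * starRingEnd ℂ (AForm p Y)).re := by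
      rw [← Complex.conj_re (AForm p X * starRingEnd ℂ (AForm p Y)), map_mul,
        Complex.conj_conj]
    unfold gExpl
    rw [← hsdef, key1, key2]
    have e1 : (4 * (s:ℂ)^2 * (starRingEnd ℂ X.2 * Y.2)).re =
        4 * s^2 * (starRingEnd ℂ X.2 * Y.2).re := by
      rw [show (4 * (s:ℂ)^2 : ℂ) = ((4 * s^2 : ℝ) : ℂ) by push_cast; ring,
        Complex.re_ofReal_mul]
    have e2 : (starRingEnd ℂ (AForm p X) * AForm p Y / (4 * (s:ℂ)^2)).re =
        (starRingEnd ℂ (AForm p X) * AForm p Y).re / (4 * s^2) := by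
      rw [show (4 * (s:ℂ)^2 : ℂ) = ((4 * s^2 : ℝ) : ℂ) by push_cast; ring,
        Complex.div_ofReal_re]
    rw [e1, e2, hre1, hre2]
    have hsne' : s ≠ 0 := hs.ne'
    generalize (X.2 * starRingEnd ℂ Y.2).re = r1
    generalize (AForm p X * starRingEnd ℂ (AForm p Y)).re = r2
    clear key1 key2 e1 e2 hre1 hre2 hA hJ1 hJ2 hee hedef hsne hsdef hw hp
    field_simp
    ring
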